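/- Call a component non-factorizable if it is not equal to a product of two components of positive degree. Then the set of non-factorizable components of Comp(G,ξ) is finite, and every component is a product of finitely many non-factorizable components; in particular the monoid Comp(G,ξ) is finitely generated. -/

import Mathlib

open scoped Classical

/-- One Hurwitz braid move: replace adjacent entries `a, b` by `a*b*a⁻¹, a`. -/
inductive BraidMove (G : Type*) [Group G] : List G → List G → Prop
  | mk (l₁ l₂ : List G) (a b : G) :
      BraidMove G (l₁ ++ a :: b :: l₂) (l₁ ++ (a * b * a⁻¹) :: a :: l₂)

/-- Braid equivalence of tuples: the equivalence relation generated by Hurwitz moves. -/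
def BraidEquiv (G : Type*) [Group G] : List G → List G → Prop :=
  Relation.EqvGen (BraidMove G)

theorem BraidMove.append_right {G : Type*} [Group G] {l l' : List G} (m : List G)
    (h : BraidMove G l l') : BraidMove G (l ++ m) (l' ++ m) := by
  cases h with
  | mk l₁ l₂ a b =>
    simpa only [List.append_assoc, List.cons_append] using BraidMove.mk (G := G) l₁ (l₂ ++ m) a b

theorem BraidMove.append_left {G : Type*} [Group G] {l l' : List G} (m : List G)
    (h : BraidMove G l l') : BraidMove G (m ++ l) (m ++ l') := by
  cases h with
  | mk l₁ l₂ a b =>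
    simpa only [← List.append_assoc] using BraidMove.mk (G := G) (m ++ l₁) l₂ a b

theorem BraidEquiv.append_right {G : Type*} [Group G] {l l' : List G} (m : List G)
    (h : BraidEquiv G l l') : BraidEquiv G (l ++ m) (l' ++ m) := by
  induction h with
  | rel x y hxy => exact Relation.EqvGen.rel _ _ (hxy.append_right m)
  | refl x => exact Relation.EqvGen.refl _
  | symm x y _ ih => exact Relation.EqvGen.symm _ _ ih
  | trans x y z _ _ ih₁ ih₂ => exact Relation.EqvGen.trans _ _ _ ih₁ ih₂

theorem BraidEquiv.append_left {G : Type*} [Group G] {l l' : List G} (m : List G)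
    (h : BraidEquiv G l l') : BraidEquiv G (m ++ l) (m ++ l') := by
  induction h with
  | rel x y hxy => exact Relation.EqvGen.rel _ _ (hxy.append_left m)
  | refl x => exact Relation.EqvGen.refl _
  | symm x y _ ih => exact Relation.EqvGen.symm _ _ ih
  | trans x y z _ _ ih₁ ih₂ => exact Relation.EqvGen.trans _ _ _ ih₁ ih₂

theorem BraidEquiv.append {G : Type*} [Group G] {a b c d : List G}
    (h₁ : BraidEquiv G a b) (h₂ : BraidEquiv G c d) : BraidEquiv G (a ++ c) (b ++ d) :=
  Relation.EqvGen.trans _ _ _ (h₁.append_right c) (h₂.append_left b)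

/-- The setoid of braid equivalence on tuples of elements of `G`. -/
def braidSetoid (G : Type*) [Group G] : Setoid (List G) :=
  Relation.EqvGen.setoid (BraidMove G)

/-- Braid-equivalence classes of tuples of elements of `G`. -/
def HurwitzCl (G : Type*) [Group G] : Type _ :=
  Quotient (braidSetoid G)

/-- Concatenation endows the set of braid-equivalence classes with a monoid structure,
the class of the empty tuple being the identity. -/
instance (G : Type*) [Group G] : Monoid (HurwitzCl G) where
  mul := Quotient.map₂ (· ++ ·) fun _ _ h₁ _ _ h₂ => BraidEquiv.append h₁ h₂
  one := Quotient.mk (braidSetoid G) []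
  mul_assoc a b c := by
    refine Quotient.inductionOn₃ a b c fun a b c => ?_
    exact congrArg (Quotient.mk _) (List.append_assoc a b c)
  one_mul a := by
    refine Quotient.inductionOn a fun a => ?_
    rfl
  mul_one a := by
    refine Quotient.inductionOn a fun a => ?_
    exact congrArg (Quotient.mk _) (List.append_nil a)

/-- The braid-equivalence class of a tuple. -/
def HurwitzCl.mk {G : Type*} [Group G] (l : List G) : HurwitzCl G :=
  Quotient.mk (braidSetoid G) l

theorem HurwitzCl.mk_mul {G : Type*} [Group G] (l l' : List G) :
    HurwitzCl.mk l * HurwitzCl.mk l' = HurwitzCl.mk (l ++ l') := rfl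

/-- The total weight `|ξ| = ∑_{c ∈ D} ξ(c)`. -/
def totalXi {G : Type*} [Group G] (D : Finset (ConjClasses G)) (ξ : ConjClasses G → ℕ) : ℕ :=
  ∑ c ∈ D, ξ c

/-- `l` is a tuple representing a component of degree `n`: it has product `1`,
length `n·|ξ|`, and exactly `n·ξ(c)` entries in the class `c`, for each `c ∈ D`. -/
def IsComponentList {G : Type*} [Group G] (D : Finset (ConjClasses G))
    (ξ : ConjClasses G → ℕ) (n : ℕ) (l : List G) : Prop :=
  l.prod = 1 ∧ l.length = n * totalXi D ξ ∧
    ∀ c ∈ D, l.countP (fun x => decide (ConjClasses.mk x = c)) = n * ξ c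

/-- The monoid of components `Comp(G,ξ)`, as a submonoid of the monoid of
braid-equivalence classes of tuples under concatenation. -/
def Comp {G : Type*} [Group G] (D : Finset (ConjClasses G)) (ξ : ConjClasses G → ℕ) :
    Submonoid (HurwitzCl G) where
  carrier := {x | ∃ n l, x = HurwitzCl.mk l ∧ IsComponentList D ξ n l}
  one_mem' := ⟨0, [], rfl, by simp [IsComponentList]⟩
  mul_mem' := by
    rintro x y ⟨n, l, rfl, hl1, hl2, hl3⟩ ⟨n', l', rfl, hl1', hl2', hl3'⟩
    refine ⟨n + n', l ++ l', rfl, ?_, ?_, ?_⟩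
    · simp [List.prod_append, hl1, hl1']
    · simp [hl2, hl2', add_mul]
    · intro c hc
      simp [List.countP_append, hl3 c hc, hl3' c hc, add_mul]

/-- A component is non-factorizable if it is not a product of two components of
positive degree (i.e. two nontrivial components). -/
def NonFactorizable {G : Type*} [Group G] {D : Finset (ConjClasses G)}
    {ξ : ConjClasses G → ℕ} (x : ↥(Comp D ξ)) : Prop :=
  ¬ ∃ y z : ↥(Comp D ξ), y ≠ 1 ∧ z ≠ 1 ∧ x = y * z


namespace CompAux
section GroupOnly
variable {G : Type*} [Group G]

/-- Count of entries in a conjugacy class, elaborated once and for all in the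
`[Group G]`-only context (matching `IsComponentList`). -/
noncomputable def cP (c : ConjClasses G) (l : List G) : ℕ :=
  l.countP (fun x => decide (ConjClasses.mk x = c))

theorem isComponentList_iff (D : Finset (ConjClasses G)) (ξ : ConjClasses G → ℕ)
    (n : ℕ) (l : List G) :
    IsComponentList D ξ n l ↔
      (l.prod = 1 ∧ l.length = n * totalXi D ξ ∧ ∀ c ∈ D, cP c l = n * ξ c) :=
  Iff.rfl

theorem cP_append (c : ConjClasses G) (l l' : List G) :
    cP c (l ++ l') = cP c l + cP c l' :=
  List.countP_append

theorem cP_replicate (c : ConjClasses G) (g : G) (n : ℕ) :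
    cP c (List.replicate n g) = if ConjClasses.mk g = c then n else 0 := by
  rw [cP, List.countP_replicate]
  by_cases h : ConjClasses.mk g = c <;> simp [h]

theorem BM.length_eq {l l' : List G} (h : BraidMove G l l') : l.length = l'.length := by
  cases h; simp

theorem BM.prod_eq {l l' : List G} (h : BraidMove G l l') : l.prod = l'.prod := by
  cases h; simp [mul_assoc]

theorem BM.cP_eq {l l' : List G} (h : BraidMove G l l') (c : ConjClasses G) :
    cP c l = cP c l' := by
  cases h with
  | mk l₁ l₂ a b =>
    have hmk : ConjClasses.mk (a * b * a⁻¹) = ConjClasses.mk b :=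
      ConjClasses.mk_eq_mk_iff_isConj.2 (isConj_iff.2 ⟨a, rfl⟩).symm
    simp only [cP, List.countP_append, List.countP_cons, hmk]
    ring

theorem BE.length_eq {l l' : List G} (h : BraidEquiv G l l') : l.length = l'.length := by
  induction h with
  | rel _ _ h => exact BM.length_eq h
  | refl _ => rfl
  | symm _ _ _ ih => exact ih.symm
  | trans _ _ _ _ _ ih₁ ih₂ => exact ih₁.trans ih₂

theorem BE.prod_eq {l l' : List G} (h : BraidEquiv G l l') : l.prod = l'.prod := by
  induction h with
  | rel _ _ h => exact BM.prod_eq h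
  | refl _ => rfl
  | symm _ _ _ ih => exact ih.symm
  | trans _ _ _ _ _ ih₁ ih₂ => exact ih₁.trans ih₂

theorem BE.cP_eq {l l' : List G} (h : BraidEquiv G l l') (c : ConjClasses G) :
    cP c l = cP c l' := by
  induction h with
  | rel _ _ h => exact BM.cP_eq h c
  | refl _ => rfl
  | symm _ _ _ ih => exact ih.symm
  | trans _ _ _ _ _ ih₁ ih₂ => exact ih₁.trans ih₂

theorem BE.refl (l : List G) : BraidEquiv G l l := Relation.EqvGen.refl l

theorem BE.trans {a b c : List G} (h₁ : BraidEquiv G a b) (h₂ : BraidEquiv G b c) :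
    BraidEquiv G a c := Relation.EqvGen.trans _ _ _ h₁ h₂

theorem pull_front (l₁ : List G) (g : G) (l₂ : List G) :
    BraidEquiv G (l₁ ++ g :: l₂) (g :: ((l₁.map fun a => g⁻¹ * a * g) ++ l₂)) := by
  induction l₁ generalizing l₂ with
  | nil => exact BE.refl _
  | cons a t ih =>
    have h1 : BraidEquiv G ([a] ++ (t ++ g :: l₂))
        ([a] ++ (g :: ((t.map fun x => g⁻¹ * x * g) ++ l₂))) :=
      BraidEquiv.append_left [a] (ih l₂)
    have h2 : BraidMove G (g :: (g⁻¹ * a * g) :: ((t.map fun x => g⁻¹ * x * g) ++ l₂))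
        (a :: g :: ((t.map fun x => g⁻¹ * x * g) ++ l₂)) := by
      simpa [mul_assoc] using
        BraidMove.mk (G := G) [] ((t.map fun x => g⁻¹ * x * g) ++ l₂) g (g⁻¹ * a * g)
    refine BE.trans (by simpa using h1) ?_
    refine BE.trans (Relation.EqvGen.symm _ _ (Relation.EqvGen.rel _ _ h2)) ?_
    simp only [List.map_cons, List.cons_append]
    exact BE.refl _

theorem extract_replicate (g : G) (k : ℕ) :
    ∀ l : List G, k ≤ l.count g → ∃ l', BraidEquiv G l (List.replicate k g ++ l') := by
  induction k with
  | zero => exact fun l _ => ⟨l, BE.refl l⟩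
  | succ k ih =>
    intro l hk
    have hg : g ∈ l := List.count_pos_iff.1 (by omega)
    obtain ⟨l₁, l₂, rfl⟩ := List.append_of_mem hg
    have hinj : Function.Injective (fun a : G => g⁻¹ * a * g) := fun a b h => by
      simpa using mul_left_cancel (mul_right_cancel h)
    have hcnt : k ≤ ((l₁.map fun a => g⁻¹ * a * g) ++ l₂).count g := by
      have h1 : ((l₁.map fun a => g⁻¹ * a * g)).count g = l₁.count g := by
        have := List.count_map_of_injective (x := g) l₁ (fun a : G => g⁻¹ * a * g) hinj
        simpa using this
      have h2 : (l₁ ++ g :: l₂).count g = l₁.count g + (l₂.count g + 1) := by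
        simp [List.count_append, List.count_cons]
      rw [List.count_append, h1]
      omega
    obtain ⟨l', hl'⟩ := ih _ hcnt
    refine ⟨l', BE.trans (pull_front l₁ g l₂) ?_⟩
    have := BraidEquiv.append_left (G := G) [g] hl'
    simpa [List.replicate_succ] using this

theorem isComponentList_append {D : Finset (ConjClasses G)} {ξ : ConjClasses G → ℕ}
    {m m' : ℕ} {l l' : List G} (h : IsComponentList D ξ m l)
    (h' : IsComponentList D ξ m' l') : IsComponentList D ξ (m + m') (l ++ l') := by
  rw [isComponentList_iff] at h h' ⊢
  obtain ⟨h1, h2, h3⟩ := h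
  obtain ⟨h1', h2', h3'⟩ := h'
  refine ⟨by simp [List.prod_append, h1, h1'], by simp [h2, h2', add_mul], ?_⟩
  intro c hc
  rw [cP_append, h3 c hc, h3' c hc, add_mul]

theorem deg_unique {D : Finset (ConjClasses G)} {ξ : ConjClasses G → ℕ}
    (hT : 1 ≤ totalXi D ξ) {n m : ℕ} {l l' : List G} (h : IsComponentList D ξ n l)
    (h' : IsComponentList D ξ m l') (he : BraidEquiv G l l') : n = m := by
  have hlen := BE.length_eq he
  rw [h.2.1, h'.2.1] at hlen
  exact Nat.eq_of_mul_eq_mul_right hT hlen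

theorem mk_eq_mk {l l' : List G} : HurwitzCl.mk l = HurwitzCl.mk l' ↔ BraidEquiv G l l' :=
  ⟨fun h => Quotient.exact h, fun h => Quotient.sound h⟩

theorem comp_eq_one {D : Finset (ConjClasses G)} {ξ : ConjClasses G → ℕ}
    (hT : 1 ≤ totalXi D ξ) {n : ℕ} {l : List G} (h : IsComponentList D ξ n l)
    {x : ↥(Comp D ξ)} (hx : x.val = HurwitzCl.mk l) : x = 1 ↔ n = 0 := by
  constructor
  · rintro rfl
    have h1 : ((1 : ↥(Comp D ξ)) : HurwitzCl G) = HurwitzCl.mk [] := rfl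
    rw [h1] at hx
    have := BE.length_eq (mk_eq_mk.1 hx.symm)
    rw [h.2.1] at this
    simp at this
    rcases this with h' | h'
    · exact h'
    · omega
  · intro hn
    have hlen : l.length = 0 := by rw [h.2.1, hn, zero_mul]
    have hl : l = [] := List.length_eq_zero_iff.1 hlen
    apply Subtype.ext
    rw [hx, hl]
    rfl

end GroupOnly

section WithFintype
variable {G : Type*} [Group G] [Fintype G]

theorem countP_eq_sum_count (p : G → Bool) (l : List G) :
    l.countP p = ∑ g ∈ Finset.univ, if p g then l.count g else 0 := by
  induction l with
  | nil => simp
  | cons a l ih =>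
    rw [List.countP_cons, ih]
    have : ∀ g : G, (if p g then (a :: l).count g else 0) =
        (if p g then l.count g else 0) + (if g = a then (if p a then 1 else 0) else 0) := by
      intro g
      rcases eq_or_ne g a with rfl | hga
      · simp only [List.count_cons_self]
        split <;> simp
      · simp [List.count_cons, hga, Ne.symm hga]
    rw [Finset.sum_congr rfl fun g _ => this g, Finset.sum_add_distrib,
      Finset.sum_ite_eq' Finset.univ a]
    simp

theorem exists_count_ge (p : G → Bool) (k : ℕ) (hk : 1 ≤ k) (l : List G)
    (h : Fintype.card G * k ≤ l.countP p) : ∃ g, p g = true ∧ k ≤ l.count g := by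
  by_contra hc
  push_neg at hc
  have hle : l.countP p ≤ Fintype.card G * (k - 1) := by
    rw [countP_eq_sum_count]
    calc (∑ g ∈ Finset.univ, if p g then l.count g else 0)
        ≤ ∑ _g ∈ (Finset.univ : Finset G), (k - 1) := by
          refine Finset.sum_le_sum fun g _ => ?_
          split
          · have := hc g (by assumption); omega
          · omega
      _ = Fintype.card G * (k - 1) := by simp [Finset.sum_const, mul_comm]
  have hpos : 0 < Fintype.card G := Fintype.card_pos
  have hmul : Fintype.card G * k = Fintype.card G * (k - 1) + Fintype.card G := by
    conv_lhs => rw [show k = (k - 1) + 1 by omega]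
    ring
  omega

set_option maxHeartbeats 2000000 in
theorem exists_count_ge' (c : ConjClasses G) (k : ℕ) (hk : 1 ≤ k) (l : List G)
    (h : Fintype.card G * k ≤ cP c l) :
    ∃ g : G, ConjClasses.mk g = c ∧ k ≤ l.count g := by
  unfold cP at h
  obtain ⟨g, hg, hcnt⟩ := exists_count_ge _ k hk l h
  exact ⟨g, by simpa using hg, hcnt⟩

/-- Multi-class extraction: braid `l` into a balanced prefix and a remainder. -/
theorem extract_component (k : ConjClasses G → ℕ) :
    ∀ cs : List (ConjClasses G), cs.Nodup →
    (∀ c ∈ cs, ∀ g : G, g ^ k c = 1) →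
    (∀ c ∈ cs, 1 ≤ k c) →
    ∀ l : List G,
    (∀ c ∈ cs, Fintype.card G * k c ≤ cP c l) →
    ∃ P l', BraidEquiv G l (P ++ l') ∧ P.prod = 1 ∧ P.length = (cs.map k).sum ∧
      (∀ d : ConjClasses G, cP d P = if d ∈ cs then k d else 0) := by
  intro cs
  induction cs with
  | nil => exact fun _ _ _ l _ => ⟨[], l, BE.refl l, rfl, rfl, fun d => by simp [cP]⟩
  | cons c cs ih =>
    intro hnd hpow hk l hcount
    obtain ⟨g, hgc, hgcnt⟩ := exists_count_ge' c (k c)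
      (hk c List.mem_cons_self) l (hcount c List.mem_cons_self)
    obtain ⟨l₁, hl₁⟩ := extract_replicate g (k c) l hgcnt
    have hcount₁ : ∀ d ∈ cs, Fintype.card G * k d ≤ cP d l₁ := by
      intro d hd
      have heq := BE.cP_eq hl₁ d
      have hcd : c ≠ d := fun h => (List.nodup_cons.1 hnd).1 (h ▸ hd)
      rw [cP_append, cP_replicate, hgc, if_neg hcd] at heq
      have := hcount d (List.mem_cons_of_mem c hd)
      omega
    obtain ⟨P, l', hl', hP1, hP2, hP3⟩ := ih (List.nodup_cons.1 hnd).2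
      (fun d hd => hpow d (List.mem_cons_of_mem c hd))
      (fun d hd => hk d (List.mem_cons_of_mem c hd)) l₁ hcount₁
    refine ⟨List.replicate (k c) g ++ P, l', ?_, ?_, ?_, ?_⟩
    · refine BE.trans hl₁ ?_
      have := BraidEquiv.append_left (G := G) (List.replicate (k c) g) hl'
      simpa [List.append_assoc] using this
    · rw [List.prod_append, List.prod_replicate, hpow c List.mem_cons_self g, hP1, one_mul]
    · simp [hP2]
    · intro d
      rw [cP_append, cP_replicate, hgc, hP3 d]
      have hnotin : c ∉ cs := (List.nodup_cons.1 hnd).1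
      rcases eq_or_ne d c with rfl | hdc
      · simp [hnotin]
      · simp only [List.mem_cons, if_neg (Ne.symm hdc)]
        by_cases hdcs : d ∈ cs
        · simp [hdcs]
        · simp [hdcs, hdc]

/-- Any component of degree at least `|G|²` factors into a degree-`|G|` component
and the rest. -/
theorem component_factor (D : Finset (ConjClasses G)) (ξ : ConjClasses G → ℕ)
    (hξ : ∀ c ∈ D, 1 ≤ ξ c) (n : ℕ) (l : List G) (hl : IsComponentList D ξ n l)
    (hn : Fintype.card G * Fintype.card G ≤ n) :
    ∃ P B : List G, BraidEquiv G l (P ++ B) ∧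
      IsComponentList D ξ (Fintype.card G) P ∧
      IsComponentList D ξ (n - Fintype.card G) B := by
  obtain ⟨hp, hlen, hcnt⟩ := (isComponentList_iff D ξ n l).1 hl
  have hE : 1 ≤ Fintype.card G := Fintype.card_pos
  obtain ⟨P, B, hbe, hP1, hP2, hP3⟩ := extract_component (fun c => Fintype.card G * ξ c)
    D.toList D.nodup_toList
    (fun c _ g => by rw [pow_mul, pow_card_eq_one, one_pow])
    (fun c hc => Nat.one_le_iff_ne_zero.2 (Nat.mul_ne_zero (by omega)
      (Nat.one_le_iff_ne_zero.1 (hξ c (Finset.mem_toList.1 hc)))))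
    l
    (fun c hc => by
      rw [hcnt c (Finset.mem_toList.1 hc), ← mul_assoc]
      exact Nat.mul_le_mul_right _ hn)
  have hPlen : P.length = Fintype.card G * totalXi D ξ := by
    rw [hP2]
    rw [show (List.map (fun c => Fintype.card G * ξ c) D.toList).sum
        = ∑ c ∈ D, Fintype.card G * ξ c from Finset.sum_map_toList D _]
    rw [totalXi, Finset.mul_sum]
  have hPcomp : IsComponentList D ξ (Fintype.card G) P := by
    rw [isComponentList_iff]
    refine ⟨hP1, hPlen, fun c hc => ?_⟩
    rw [hP3 c, if_pos (Finset.mem_toList.2 hc)]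
  have hBcomp : IsComponentList D ξ (n - Fintype.card G) B := by
    rw [isComponentList_iff]
    have hprodPB := BE.prod_eq hbe
    rw [hp, List.prod_append, hP1, one_mul] at hprodPB
    have hlenPB := BE.length_eq hbe
    rw [hlen, List.length_append, hPlen] at hlenPB
    refine ⟨hprodPB.symm, ?_, fun c hc => ?_⟩
    · rw [Nat.sub_mul]; omega
    · have hc' := BE.cP_eq hbe c
      rw [hcnt c hc, cP_append, hP3 c, if_pos (Finset.mem_toList.2 hc)] at hc'
      rw [Nat.sub_mul]
      have hge : Fintype.card G * ξ c ≤ n * ξ c :=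
        Nat.mul_le_mul_right _ (le_trans (Nat.le_mul_of_pos_left _ (by omega)) hn)
      omega
  exact ⟨P, B, hbe, hPcomp, hBcomp⟩

end WithFintype
end CompAux

/-- there are finitely many non-factorizable components, every component
is a product of finitely many non-factorizable components, and in particular the
monoid of components is finitely generated. -/
theorem comp_finitely_generated
    (G : Type*) [Group G] [Fintype G] [Nontrivial G]
    (D : Finset (ConjClasses G))
    (hD : ∀ c ∈ D, (1 : G) ∉ ConjClasses.carrier c)
    (hDgen : Subgroup.closure {g : G | ConjClasses.mk g ∈ D} = ⊤)
    (ξ : ConjClasses G → ℕ) (hξ : ∀ c ∈ D, 1 ≤ ξ c) :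
    {x : ↥(Comp D ξ) | NonFactorizable x}.Finite ∧
      (∀ x : ↥(Comp D ξ), ∃ l : List ↥(Comp D ξ),
        (∀ y ∈ l, NonFactorizable y) ∧ x = l.prod) ∧
      Monoid.FG ↥(Comp D ξ) := by
  classical
  have hDne : D.Nonempty := by
    by_contra h
    rw [Finset.not_nonempty_iff_eq_empty] at h
    subst h
    rw [show {g : G | ConjClasses.mk g ∈ (∅ : Finset (ConjClasses G))} = ∅ by simp] at hDgen
    rw [Subgroup.closure_empty] at hDgen
    exact absurd hDgen bot_ne_top
  have hT : 1 ≤ totalXi D ξ := by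
    obtain ⟨c₀, hc₀⟩ := hDne
    calc 1 ≤ ξ c₀ := hξ c₀ hc₀
    _ ≤ totalXi D ξ := Finset.single_le_sum (fun i _ => Nat.zero_le _) hc₀
  have hE1 : 1 ≤ Fintype.card G := Fintype.card_pos
  have hE2 : 2 ≤ Fintype.card G := Fintype.one_lt_card
  have hEN : Fintype.card G < Fintype.card G * Fintype.card G := by nlinarith
  have key : ∀ (x : ↥(Comp D ξ)) n l, x.val = HurwitzCl.mk l → IsComponentList D ξ n l →
      NonFactorizable x → n < Fintype.card G * Fintype.card G := by
    intro x n l hval hcl hnf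
    by_contra hge
    push_neg at hge
    obtain ⟨P, B, hbe, hP, hB⟩ := CompAux.component_factor D ξ hξ n l hcl hge
    have hyP : HurwitzCl.mk P ∈ Comp D ξ := ⟨Fintype.card G, P, rfl, hP⟩
    have hzB : HurwitzCl.mk B ∈ Comp D ξ := ⟨n - Fintype.card G, B, rfl, hB⟩
    refine hnf ⟨⟨_, hyP⟩, ⟨_, hzB⟩, ?_, ?_, ?_⟩
    · intro h1
      have := (CompAux.comp_eq_one hT hP (x := ⟨_, hyP⟩) rfl).1 h1
      omega
    · intro h1
      have := (CompAux.comp_eq_one hT hB (x := ⟨_, hzB⟩) rfl).1 h1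
      omega
    · apply Subtype.ext
      show x.val = HurwitzCl.mk P * HurwitzCl.mk B
      rw [HurwitzCl.mk_mul, hval]
      exact CompAux.mk_eq_mk.2 hbe
  have hfin : {x : ↥(Comp D ξ) | NonFactorizable x}.Finite := by
    have hfin0 : {l : List G | l.length ≤ Fintype.card G * Fintype.card G * totalXi D ξ}.Finite :=
      List.finite_length_le G _
    have hsub : {x : ↥(Comp D ξ) | NonFactorizable x} ⊆
        (fun l : List G =>
          if h : HurwitzCl.mk l ∈ Comp D ξ then (⟨_, h⟩ : ↥(Comp D ξ)) else 1) ''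
          {l : List G | l.length ≤ Fintype.card G * Fintype.card G * totalXi D ξ} := by
      rintro x hx
      obtain ⟨n, l, hval, hcl⟩ := x.2
      have hn := key x n l hval hcl hx
      refine ⟨l, ?_, ?_⟩
      · show l.length ≤ _
        rw [hcl.2.1]
        exact Nat.mul_le_mul_right _ (le_of_lt hn)
      · have hmem : HurwitzCl.mk l ∈ Comp D ξ := ⟨n, l, rfl, hcl⟩
        simp only [dif_pos hmem]
        exact Subtype.ext hval.symm
    exact (hfin0.image _).subset hsub
  have decomp : ∀ n (x : ↥(Comp D ξ)),
      (∃ l, x.val = HurwitzCl.mk l ∧ IsComponentList D ξ n l) →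
      ∃ L : List ↥(Comp D ξ), (∀ y ∈ L, NonFactorizable y) ∧ x = L.prod := by
    intro n
    induction n using Nat.strong_induction_on with
    | _ n ih =>
      rintro x ⟨l, hval, hcl⟩
      rcases Nat.eq_zero_or_pos n with rfl | hn
      · refine ⟨[], by simp, ?_⟩
        have := (CompAux.comp_eq_one hT hcl hval).2 rfl
        simpa using this
      · by_cases hx : NonFactorizable x
        · exact ⟨[x], by simpa using hx, by simp⟩
        · rw [NonFactorizable, not_not] at hx
          obtain ⟨y, z, hy, hz, hxyz⟩ := hx
          obtain ⟨m, ly, hvy, hcy⟩ := y.2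
          obtain ⟨m', lz, hvz, hcz⟩ := z.2
          have hcyz : IsComponentList D ξ (m + m') (ly ++ lz) :=
            CompAux.isComponentList_append hcy hcz
          have hvalyz : x.val = HurwitzCl.mk (ly ++ lz) := by
            rw [hxyz]
            show y.val * z.val = _
            rw [hvy, hvz, HurwitzCl.mk_mul]
          have hnm : n = m + m' :=
            CompAux.deg_unique hT hcl hcyz (CompAux.mk_eq_mk.1 (hval.symm.trans hvalyz))
          have hm1 : 1 ≤ m := by
            by_contra h
            exact hy ((CompAux.comp_eq_one hT hcy hvy).2 (by omega))
          have hm1' : 1 ≤ m' := by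
            by_contra h
            exact hz ((CompAux.comp_eq_one hT hcz hvz).2 (by omega))
          obtain ⟨Ly, hLy, hLyp⟩ := ih m (by omega) y ⟨ly, hvy, hcy⟩
          obtain ⟨Lz, hLz, hLzp⟩ := ih m' (by omega) z ⟨lz, hvz, hcz⟩
          refine ⟨Ly ++ Lz, ?_, ?_⟩
          · intro u hu
            rcases List.mem_append.1 hu with h | h
            exacts [hLy u h, hLz u h]
          · rw [hxyz, hLyp, hLzp, List.prod_append]
  refine ⟨hfin, ?_, ?_⟩
  · intro x
    obtain ⟨n, l, hval, hcl⟩ := x.2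
    exact decomp n x ⟨l, hval, hcl⟩
  · rw [Monoid.fg_iff]
    refine ⟨{x | NonFactorizable x}, ?_, hfin⟩
    rw [eq_top_iff]
    intro x _
    obtain ⟨n, l, hval, hcl⟩ := x.2
    obtain ⟨L, hL, hLp⟩ := decomp n x ⟨l, hval, hcl⟩
    rw [hLp]
    exact Submonoid.list_prod_mem _ fun y hy => Submonoid.subset_closure (hL y hy)
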